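/- Let L1, L2 : F_{2^n} → F_{2^n} be F_2-linear maps. Then x ↦ L1(x^{-1}) + L2(x) (with 0^{-1}=0) is a permutation of F_{2^n} if and only if ker(L1*) ∩ ker(L2*) = {0} and K_n(L1*(b) · L2*(b)) = 0 for all b ∈ F_{2^n}, where K_n is the Kloosterman sum and L* the adjoint with respect to the trace form. -/

import Mathlib

noncomputable section

abbrev K (n : ℕ) := GaloisField 2 n

noncomputable instance (n : ℕ) : Fintype (K n) := Fintype.ofFinite _

/-- The absolute trace of `F_{2^n}` to `F_2`. -/
def tr (n : ℕ) : K n →ₗ[ZMod 2] ZMod 2 := Algebra.trace (ZMod 2) (K n)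

/-- The additive character `x ↦ (-1)^{Tr(x)}`. -/
def chi (n : ℕ) (x : K n) : ℤ := (-1) ^ (tr n x).val

/-- The Kloosterman sum. -/
def Kl (n : ℕ) (a : K n) : ℤ := ∑ x : K n, chi n (x⁻¹ + a * x)

/-- The Walsh transform of `F`. -/
def W (n : ℕ) (F : K n → K n) (a b : K n) : ℤ := ∑ x : K n, chi n (a * F x + b * x)

/-- The quadratic form `Q(x) = ∑_{0 ≤ i < j < n} x^{2^i + 2^j}`. -/
def Qf (n : ℕ) (x : K n) : K n := ∑ i ∈ Finset.range n, ∑ j ∈ Finset.Ioo i n, x ^ (2^i + 2^j)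

variable {n : ℕ}

lemma chi_congr {x y : K n} (h : tr n x = tr n y) : chi n x = chi n y := by
  unfold chi; rw [h]

lemma chi_zero : chi n 0 = 1 := by
  unfold chi; rw [map_zero]; rfl

lemma chi_add (x y : K n) : chi n (x + y) = chi n x * chi n y := by
  unfold chi
  rw [map_add]
  generalize tr n x = a; generalize tr n y = b
  revert a b; decide

lemma exists_tr_one {c : K n} (hc : c ≠ 0) : ∃ y, tr n (c * y) = 1 := by
  have hnd := traceForm_nondegenerate (ZMod 2) (K n)
  by_contra h
  push_neg at h
  refine hc (hnd.1 c fun y => ?_)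
  have h2 : tr n (c * y) = 0 ∨ tr n (c * y) = 1 := by
    generalize tr n (c * y) = a; revert a; decide
  rcases h2 with h0 | h1
  · exact h0
  · exact absurd h1 (h y)

lemma sum_chi_eq_zero {c : K n} (hc : c ≠ 0) : ∑ x : K n, chi n (c * x) = 0 := by
  obtain ⟨y, hy⟩ := exists_tr_one hc
  have key : ∑ x : K n, chi n (c * x) = - ∑ x : K n, chi n (c * x) := by
    nth_rewrite 1 [← Equiv.sum_comp (Equiv.addRight y) (fun x => chi n (c * x))]
    rw [← Finset.sum_neg_distrib]
    refine Finset.sum_congr rfl fun x _ => ?_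
    simp only [Equiv.coe_addRight]
    rw [mul_add, chi_add]
    have hcy : chi n (c * y) = -1 := by unfold chi; rw [hy]; rfl
    rw [hcy]; ring
  omega

lemma sum_chi_id_eq_zero : ∑ x : K n, chi n x = 0 := by
  have := sum_chi_eq_zero (n := n) one_ne_zero
  simpa using this

lemma sum_chi_inv_eq_zero : ∑ x : K n, chi n x⁻¹ = 0 := by
  rw [Fintype.sum_bijective (·⁻¹) (Function.Involutive.bijective inv_involutive)
    (fun x : K n => chi n x⁻¹) (chi n) (fun x => rfl)]
  exact sum_chi_id_eq_zero

lemma Kl_zero : Kl n 0 = 0 := by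
  unfold Kl
  calc ∑ x : K n, chi n (x⁻¹ + 0 * x) = ∑ x : K n, chi n x⁻¹ := by
        refine Finset.sum_congr rfl fun x _ => ?_; rw [zero_mul, add_zero]
    _ = 0 := sum_chi_inv_eq_zero

lemma char2_add_eq_zero_iff {a b : K n} : a + b = 0 ↔ a = b := by
  constructor
  · intro h
    have := CharTwo.neg_eq (R := K n) b
    rw [add_eq_zero_iff_eq_neg, this] at h
    exact h
  · intro h; rw [h]; exact CharTwo.add_self_eq_zero b

lemma bij_iff (F : K n → K n) :
    Function.Bijective F ↔ ∀ b : K n, b ≠ 0 → ∑ x : K n, chi n (b * F x) = 0 := by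
  classical
  constructor
  · intro hF b hb
    rw [Fintype.sum_bijective F hF (fun x => chi n (b * F x)) (fun y => chi n (b * y))
      (fun x => rfl)]
    exact sum_chi_eq_zero hb
  · intro h
    rw [Function.bijective_iff_existsUnique]
    intro c
    have qpos : 0 < (Fintype.card (K n) : ℤ) := by exact_mod_cast Fintype.card_pos
    have key : ∑ x : K n, ∑ b : K n, chi n (b * (F x + c)) = (Fintype.card (K n) : ℤ) := by
      rw [Finset.sum_comm]
      have inner : ∀ b : K n, ∑ x : K n, chi n (b * (F x + c))
          = if b = 0 then (Fintype.card (K n) : ℤ) else 0 := by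
        intro b
        split_ifs with hb
        · subst hb
          simp [chi_zero]
        · calc ∑ x : K n, chi n (b * (F x + c))
              = ∑ x : K n, chi n (b * F x) * chi n (b * c) := by
                refine Finset.sum_congr rfl fun x _ => ?_; rw [mul_add, chi_add]
            _ = (∑ x : K n, chi n (b * F x)) * chi n (b * c) := by rw [Finset.sum_mul]
            _ = 0 := by rw [h b hb, zero_mul]
      rw [Finset.sum_congr rfl fun b _ => inner b]
      simp
    have key2 : ∑ x : K n, ∑ b : K n, chi n (b * (F x + c))
        = (Fintype.card (K n) : ℤ) * ((Finset.univ.filter (fun x => F x = c)).card : ℤ) := by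
      have inner : ∀ x : K n, ∑ b : K n, chi n (b * (F x + c))
          = if F x = c then (Fintype.card (K n) : ℤ) else 0 := by
        intro x
        split_ifs with hx
        · have h0 : F x + c = 0 := char2_add_eq_zero_iff.mpr hx
          simp [h0, chi_zero]
        · have hd : F x + c ≠ 0 := fun h0 => hx (char2_add_eq_zero_iff.mp h0)
          calc ∑ b : K n, chi n (b * (F x + c)) = ∑ b : K n, chi n ((F x + c) * b) := by
                refine Finset.sum_congr rfl fun b _ => by rw [mul_comm]
            _ = 0 := sum_chi_eq_zero hd
      rw [Finset.sum_congr rfl fun x _ => inner x]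
      rw [← Finset.sum_filter, Finset.sum_const, nsmul_eq_mul]
      ring
    have hcard : (Finset.univ.filter (fun x => F x = c)).card = 1 := by
      have h1 : (Fintype.card (K n) : ℤ) * ((Finset.univ.filter (fun x => F x = c)).card : ℤ)
          = (Fintype.card (K n) : ℤ) * 1 := by rw [mul_one, ← key2, key]
      have h2 := mul_left_cancel₀ (ne_of_gt qpos) h1
      exact_mod_cast h2
    obtain ⟨a0, ha0⟩ := Finset.card_eq_one.mp hcard
    have hmem : ∀ x : K n, F x = c ↔ x = a0 := by
      intro x
      constructor
      · intro hx
        have hx2 : x ∈ Finset.univ.filter (fun x => F x = c) := by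
          simp [hx]
        rw [ha0] at hx2; simpa using hx2
      · intro hx
        subst hx
        have hx2 : x ∈ Finset.univ.filter (fun x => F x = c) := by rw [ha0]; simp
        simpa using hx2
    exact ⟨a0, (hmem a0).mpr rfl, fun x hx => (hmem x).mp hx⟩

lemma sum_kloosterman {a c : K n} (ha : a ≠ 0) :
    ∑ x : K n, chi n (a * x⁻¹ + c * x) = Kl n (a * c) := by
  unfold Kl
  refine (Fintype.sum_bijective (fun y : K n => a * y) (mulLeft_bijective₀ a ha)
    (fun y : K n => chi n (y⁻¹ + (a * c) * y)) (fun x : K n => chi n (a * x⁻¹ + c * x))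
    (fun y => ?_)).symm
  show chi n (y⁻¹ + (a * c) * y) = chi n (a * (a * y)⁻¹ + c * (a * y))
  have e1 : a * (a * y)⁻¹ = y⁻¹ := by
    rw [mul_inv_rev, ← mul_assoc, mul_comm a y⁻¹, mul_assoc, mul_inv_cancel₀ ha, mul_one]
  have e2 : c * (a * y) = (a * c) * y := by ring
  rw [e1, e2]

lemma sum_ac {a c : K n} (h : ¬(a = 0 ∧ c = 0)) :
    ∑ x : K n, chi n (a * x⁻¹ + c * x) = Kl n (a * c) := by
  by_cases ha : a = 0
  · subst ha
    have hc : c ≠ 0 := fun hc => h ⟨rfl, hc⟩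
    calc ∑ x : K n, chi n (0 * x⁻¹ + c * x) = ∑ x : K n, chi n (c * x) := by
          refine Finset.sum_congr rfl fun x _ => ?_; rw [zero_mul, zero_add]
      _ = 0 := sum_chi_eq_zero hc
      _ = Kl n (0 * c) := by rw [zero_mul, Kl_zero]
  · exact sum_kloosterman ha

theorem stmt5 {n : ℕ} (L1 L2 L1s L2s : K n →ₗ[ZMod 2] K n)
    (h1 : ∀ x y, tr n (L1 x * y) = tr n (x * L1s y))
    (h2 : ∀ x y, tr n (L2 x * y) = tr n (x * L2s y)) :
    Function.Bijective (fun x : K n => L1 x⁻¹ + L2 x) ↔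
      (LinearMap.ker L1s ⊓ LinearMap.ker L2s = ⊥ ∧
        ∀ b : K n, Kl n (L1s b * L2s b) = 0) := by
  have qpos : 0 < (Fintype.card (K n) : ℤ) := by exact_mod_cast Fintype.card_pos
  have sum_eq : ∀ b : K n, ∑ x : K n, chi n (b * (L1 x⁻¹ + L2 x))
      = ∑ x : K n, chi n (L1s b * x⁻¹ + L2s b * x) := by
    intro b
    refine Finset.sum_congr rfl fun x _ => ?_
    rw [mul_add, chi_add]
    have e1 : chi n (b * L1 x⁻¹) = chi n (L1s b * x⁻¹) := by
      refine chi_congr ?_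
      rw [mul_comm b (L1 x⁻¹), h1 x⁻¹ b, mul_comm]
    have e2 : chi n (b * L2 x) = chi n (L2s b * x) := by
      refine chi_congr ?_
      rw [mul_comm b (L2 x), h2 x b, mul_comm]
    rw [e1, e2, ← chi_add]
  rw [bij_iff]
  constructor
  · intro h
    have hker : LinearMap.ker L1s ⊓ LinearMap.ker L2s = ⊥ := by
      rw [Submodule.eq_bot_iff]
      intro b hb
      by_contra hb0
      have hb1 : L1s b = 0 := hb.1
      have hb2 : L2s b = 0 := hb.2
      have := h b hb0
      rw [sum_eq b] at this
      have hall : ∑ x : K n, chi n (L1s b * x⁻¹ + L2s b * x) = (Fintype.card (K n) : ℤ) := by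
        rw [hb1, hb2]
        simp [chi_zero]
      rw [hall] at this
      omega
    refine ⟨hker, fun b => ?_⟩
    by_cases hb0 : L1s b = 0 ∧ L2s b = 0
    · rw [hb0.1, zero_mul, Kl_zero]
    · have hbz : b ≠ 0 := by
        intro h0; subst h0
        exact hb0 ⟨map_zero _, map_zero _⟩
      have := h b hbz
      rw [sum_eq b, sum_ac hb0] at this
      exact this
  · rintro ⟨hker, hKl⟩ b hb
    have hb0 : ¬(L1s b = 0 ∧ L2s b = 0) := by
      rintro ⟨hb1, hb2⟩
      refine hb ?_
      have : b ∈ LinearMap.ker L1s ⊓ LinearMap.ker L2s := ⟨hb1, hb2⟩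
      rw [hker] at this
      simpa using this
    rw [sum_eq b, sum_ac hb0]
    exact hKl b
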